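/- Let d, T ≥ 1, let M ≥ 2 be even, let 0 < ε ≤ 0.29, and let δ ≥ 0. Let O₁, …, O_M be d×d Hermitian complex matrices with operator norm ‖O_x‖ ≤ 1 for all x and with O_{x+M/2} = −O_x for 1 ≤ x ≤ M/2. Let ψ₁, …, ψ_T ∈ ℂ^d be unit vectors such that for every t, (2/M)·∑_{x=1}^{M/2} (ψ_tᴴ O_x ψ_t)² ≤ δ. Then (1/M)·∑_{x=1}^{M} ∏_{t=1}^{T} (1 + 3ε·ψ_tᴴ O_x ψ_t) ≥ exp(−9Tε²δ) ≥ 1 − 9Tε²δ. (Since O_x is Hermitian, ψ_tᴴ O_x ψ_t is real.) -/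

import Mathlib

open Matrix Finset

noncomputable def opNorm {n : Type*} [Fintype n] [DecidableEq n] (A : Matrix n n ℂ) : ℝ :=
  ‖Matrix.toEuclideanCLM (𝕜 := ℂ) A‖

noncomputable def qform {ι : Type*} [Fintype ι] (A : Matrix ι ι ℂ) (ψ : ι → ℂ) : ℝ :=
  (∑ i, ∑ j, (starRingEnd ℂ) (ψ i) * A i j * ψ j).re

lemma qform_neg {ι : Type*} [Fintype ι] (A : Matrix ι ι ℂ) (ψ : ι → ℂ) :
    qform (-A) ψ = - qform A ψ := by
  simp [qform, Matrix.neg_apply, mul_neg, neg_mul, Finset.sum_neg_distrib]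

lemma abs_qform_le {d : ℕ} (A : Matrix (Fin d) (Fin d) ℂ) (ψ : Fin d → ℂ)
    (h : ∑ i, Complex.normSq (ψ i) = 1) : |qform A ψ| ≤ opNorm A := by
  set ψ' : EuclideanSpace ℂ (Fin d) := (WithLp.equiv 2 _).symm ψ with hψ'
  have hn : ‖ψ'‖ = 1 := by
    rw [EuclideanSpace.norm_eq]
    have : ∀ i, ‖ψ i‖ ^ 2 = Complex.normSq (ψ i) := fun i => Complex.sq_norm _
    simp only [hψ', WithLp.equiv_symm_apply, WithLp.ofLp_toLp]
    rw [Finset.sum_congr rfl (fun i _ => this i), h, Real.sqrt_one]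
  have key : qform A ψ = (inner ℂ ψ' (Matrix.toEuclideanCLM (𝕜 := ℂ) A ψ') : ℂ).re := by
    rw [hψ', WithLp.equiv_symm_apply, Matrix.toEuclideanCLM_toLp]
    simp only [qform, PiLp.inner_apply, RCLike.inner_apply, WithLp.ofLp_toLp,
      Matrix.toLin'_apply, Matrix.mulVec, dotProduct]
    congr 1
    refine Finset.sum_congr rfl fun i _ => ?_
    rw [Finset.sum_mul]
    exact Finset.sum_congr rfl fun j _ => by ring
  have h1 : ‖Matrix.toEuclideanCLM (𝕜 := ℂ) A ψ'‖ ≤ opNorm A := by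
    have := ContinuousLinearMap.le_opNorm (Matrix.toEuclideanCLM (𝕜 := ℂ) A) ψ'
    rw [hn, mul_one] at this
    exact this
  calc |qform A ψ| = |(inner ℂ ψ' (Matrix.toEuclideanCLM (𝕜 := ℂ) A ψ') : ℂ).re| := by rw [key]
    _ ≤ ‖(inner ℂ ψ' (Matrix.toEuclideanCLM (𝕜 := ℂ) A ψ') : ℂ)‖ := Complex.abs_re_le_norm _
    _ ≤ ‖ψ'‖ * ‖Matrix.toEuclideanCLM (𝕜 := ℂ) A ψ'‖ := norm_inner_le_norm _ _
    _ = ‖Matrix.toEuclideanCLM (𝕜 := ℂ) A ψ'‖ := by rw [hn, one_mul]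
    _ ≤ opNorm A := h1

lemma exp_neg_two_mul_le {u : ℝ} (h0 : 0 ≤ u) (h1 : u ≤ 0.7569) :
    Real.exp (-2 * u) ≤ 1 - u := by
  have hS : 1 + 2*u + 2*u^2 + (4/3)*u^3 + (2/3)*u^4 ≤ Real.exp (2*u) := by
    have h := Real.sum_le_exp_of_nonneg (by linarith : (0:ℝ) ≤ 2*u) 5
    have heq : ∑ i ∈ Finset.range 5, (2*u) ^ i / i.factorial
        = 1 + 2*u + 2*u^2 + (4/3)*u^3 + (2/3)*u^4 := by
      simp [Finset.sum_range_succ, Nat.factorial]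
      ring
    linarith [heq ▸ h]
  have hSpos : (0:ℝ) < 1 + 2*u + 2*u^2 + (4/3)*u^3 + (2/3)*u^4 := by positivity
  have e2 : u ^ 2 ≤ 0.7569 ^ 2 := pow_le_pow_left₀ h0 h1 2
  have e3 : u ^ 3 ≤ 0.7569 ^ 3 := pow_le_pow_left₀ h0 h1 3
  have e4 : u ^ 4 ≤ 0.7569 ^ 4 := pow_le_pow_left₀ h0 h1 4
  have h3 : 1 ≤ (1 - u) * (1 + 2*u + 2*u^2 + (4/3)*u^3 + (2/3)*u^4) := by
    nlinarith [mul_le_mul_of_nonneg_left e2 h0, mul_le_mul_of_nonneg_left e3 h0,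
      mul_le_mul_of_nonneg_left e4 h0]
  have h4 : Real.exp (-2 * u) ≤ (1 + 2*u + 2*u^2 + (4/3)*u^3 + (2/3)*u^4)⁻¹ := by
    rw [neg_mul, Real.exp_neg]
    exact inv_anti₀ hSpos hS
  refine h4.trans ?_
  rw [inv_eq_one_div, div_le_iff₀ hSpos]
  linarith

theorem shadow_tomography_likelihood_ratio_bound
    (d T M : ℕ) (hd : 1 ≤ d) (hT : 1 ≤ T) (hM : 2 ≤ M) (hMeven : Even M)
    (ε δ : ℝ) (hε0 : 0 < ε) (hε : ε ≤ 0.29) (hδ : 0 ≤ δ)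
    (O : ℕ → Matrix (Fin d) (Fin d) ℂ)
    (hherm : ∀ x < M, (O x).IsHermitian)
    (hnorm : ∀ x < M, opNorm (O x) ≤ 1)
    (hneg : ∀ x < M / 2, O (x + M / 2) = -O x)
    (ψ : ℕ → Fin d → ℂ)
    (hψ : ∀ t < T, ∑ i, Complex.normSq (ψ t i) = 1)
    (hδbound : ∀ t < T,
      (2 / M : ℝ) * ∑ x ∈ Finset.range (M / 2), (qform (O x) (ψ t)) ^ 2 ≤ δ) :
    Real.exp (-9 * T * ε ^ 2 * δ) ≤
        (1 / M : ℝ) * ∑ x ∈ Finset.range M, ∏ t ∈ Finset.range T, (1 + 3 * ε * qform (O x) (ψ t))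
      ∧ 1 - 9 * T * ε ^ 2 * δ ≤ Real.exp (-9 * T * ε ^ 2 * δ) := by
  constructor
  · set K := M / 2 with hKdef
    obtain ⟨m, hm⟩ := hMeven
    have hKM : K + K = M := by omega
    have hMR : (0:ℝ) < M := by exact_mod_cast (by omega : 0 < M)
    -- bound on |3ε q|
    have habs : ∀ x < M, ∀ t < T, |3 * ε * qform (O x) (ψ t)| ≤ 0.87 := by
      intro x hx t ht
      have h1 : |qform (O x) (ψ t)| ≤ 1 := (abs_qform_le _ _ (hψ t ht)).trans (hnorm x hx)
      rw [abs_mul]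
      have h2 : |3 * ε| = 3 * ε := abs_of_nonneg (by linarith)
      rw [h2]
      nlinarith
    -- pair bound
    have pair : ∀ x < K,
        2 * Real.exp (-∑ t ∈ Finset.range T, (3 * ε * qform (O x) (ψ t))^2) ≤
          (∏ t ∈ Finset.range T, (1 + 3 * ε * qform (O x) (ψ t))) +
          (∏ t ∈ Finset.range T, (1 + 3 * ε * qform (O (x + K)) (ψ t))) := by
      intro x hx
      have hxM : x < M := by omega
      have hx'M : x + K < M := by omega
      have hqneg : ∀ t, qform (O (x + K)) (ψ t) = -qform (O x) (ψ t) := fun t => by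
        rw [hneg x (by omega), qform_neg]
      set P1 := ∏ t ∈ Finset.range T, (1 + 3 * ε * qform (O x) (ψ t)) with hP1
      set P2 := ∏ t ∈ Finset.range T, (1 + 3 * ε * qform (O (x + K)) (ψ t)) with hP2
      have hP1n : 0 ≤ P1 := Finset.prod_nonneg fun t ht => by
        have := abs_le.mp (habs x hxM t (Finset.mem_range.mp ht))
        linarith [this.1]
      have hP2n : 0 ≤ P2 := Finset.prod_nonneg fun t ht => by
        have := abs_le.mp (habs (x + K) hx'M t (Finset.mem_range.mp ht))
        linarith [this.1]
      set E := Real.exp (-∑ t ∈ Finset.range T, (3 * ε * qform (O x) (ψ t))^2) with hE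
      have hprod : E ^ 2 ≤ P1 * P2 := by
        have hE2 : E ^ 2 = ∏ t ∈ Finset.range T,
            Real.exp (-2 * (3 * ε * qform (O x) (ψ t))^2) := by
          rw [← Real.exp_sum, hE, sq, ← Real.exp_add]
          congr 1
          rw [← neg_add, ← Finset.sum_add_distrib, ← Finset.sum_neg_distrib]
          exact (Finset.sum_congr rfl fun t _ => by ring).symm
        rw [hE2, hP1, hP2, ← Finset.prod_mul_distrib]
        refine Finset.prod_le_prod (fun t _ => (Real.exp_pos _).le) (fun t ht => ?_)
        have hat : |3 * ε * qform (O x) (ψ t)| ≤ 0.87 := habs x hxM t (Finset.mem_range.mp ht)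
        have hu1 : (3 * ε * qform (O x) (ψ t))^2 ≤ 0.7569 := by
          have := sq_abs (3 * ε * qform (O x) (ψ t))
          nlinarith [abs_nonneg (3 * ε * qform (O x) (ψ t))]
        have := exp_neg_two_mul_le (sq_nonneg (3 * ε * qform (O x) (ψ t))) hu1
        calc Real.exp (-2 * (3 * ε * qform (O x) (ψ t))^2)
            ≤ 1 - (3 * ε * qform (O x) (ψ t))^2 := this
          _ = (1 + 3 * ε * qform (O x) (ψ t)) * (1 + 3 * ε * qform (O (x + K)) (ψ t)) := by
              rw [hqneg t]; ring
      nlinarith [sq_nonneg (P1 - P2), Real.exp_pos (-∑ t ∈ Finset.range T,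
        (3 * ε * qform (O x) (ψ t))^2), hP1n, hP2n]
    -- split the sum
    have hsplit : ∑ x ∈ Finset.range M, ∏ t ∈ Finset.range T, (1 + 3 * ε * qform (O x) (ψ t))
        = ∑ x ∈ Finset.range K,
            ((∏ t ∈ Finset.range T, (1 + 3 * ε * qform (O x) (ψ t))) +
             (∏ t ∈ Finset.range T, (1 + 3 * ε * qform (O (x + K)) (ψ t)))) := by
      rw [← hKM, Finset.sum_range_add, ← Finset.sum_add_distrib]
      exact Finset.sum_congr rfl fun x _ => by rw [add_comm K x]
    have hstep1 : ∑ x ∈ Finset.range K,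
          2 * Real.exp (-∑ t ∈ Finset.range T, (3 * ε * qform (O x) (ψ t))^2)
        ≤ ∑ x ∈ Finset.range M, ∏ t ∈ Finset.range T, (1 + 3 * ε * qform (O x) (ψ t)) := by
      rw [hsplit]
      exact Finset.sum_le_sum fun x hx => pair x (Finset.mem_range.mp hx)
    -- Jensen
    have hKR : (K:ℝ) + K = M := by exact_mod_cast hKM
    have hw1 : ∑ _x ∈ Finset.range K, (2 / (M:ℝ)) = 1 := by
      rw [Finset.sum_const, Finset.card_range, nsmul_eq_mul]
      field_simp
      linarith
    have jensen := convexOn_exp.map_sum_le (t := Finset.range K)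
      (w := fun _ => 2 / (M:ℝ))
      (p := fun x => -∑ t ∈ Finset.range T, (3 * ε * qform (O x) (ψ t))^2)
      (fun _ _ => by positivity) hw1 (fun _ _ => Set.mem_univ _)
    simp only [smul_eq_mul] at jensen
    -- exponent bound
    have hexp : -9 * T * ε ^ 2 * δ ≤ ∑ x ∈ Finset.range K,
        (2 / (M:ℝ)) * (-∑ t ∈ Finset.range T, (3 * ε * qform (O x) (ψ t))^2) := by
      have hswap : ∑ x ∈ Finset.range K,
            (2 / (M:ℝ)) * (-∑ t ∈ Finset.range T, (3 * ε * qform (O x) (ψ t))^2)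
          = -∑ t ∈ Finset.range T,
              9 * ε^2 * ((2 / (M:ℝ)) * ∑ x ∈ Finset.range K, (qform (O x) (ψ t))^2) := by
        calc ∑ x ∈ Finset.range K,
              (2 / (M:ℝ)) * (-∑ t ∈ Finset.range T, (3 * ε * qform (O x) (ψ t))^2)
            = ∑ x ∈ Finset.range K, ∑ t ∈ Finset.range T,
                -(9 * ε^2 * ((2 / (M:ℝ)) * (qform (O x) (ψ t))^2)) := by
              refine Finset.sum_congr rfl fun x _ => ?_
              rw [mul_neg, Finset.mul_sum, ← Finset.sum_neg_distrib]
              exact Finset.sum_congr rfl fun t _ => by ring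
          _ = ∑ t ∈ Finset.range T, ∑ x ∈ Finset.range K,
                -(9 * ε^2 * ((2 / (M:ℝ)) * (qform (O x) (ψ t))^2)) := Finset.sum_comm
          _ = -∑ t ∈ Finset.range T,
                9 * ε^2 * ((2 / (M:ℝ)) * ∑ x ∈ Finset.range K, (qform (O x) (ψ t))^2) := by
              rw [← Finset.sum_neg_distrib]
              refine Finset.sum_congr rfl fun t _ => ?_
              rw [Finset.mul_sum, Finset.mul_sum, ← Finset.sum_neg_distrib]
      rw [hswap]
      have hsum : ∑ t ∈ Finset.range T,
            9 * ε^2 * ((2 / (M:ℝ)) * ∑ x ∈ Finset.range K, (qform (O x) (ψ t))^2)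
          ≤ ∑ _t ∈ Finset.range T, 9 * ε^2 * δ := by
        refine Finset.sum_le_sum fun t ht => ?_
        exact mul_le_mul_of_nonneg_left (hδbound t (Finset.mem_range.mp ht)) (by positivity)
      rw [Finset.sum_const, Finset.card_range, nsmul_eq_mul] at hsum
      have : (T:ℝ) * (9 * ε^2 * δ) = 9 * T * ε^2 * δ := by ring
      linarith [this ▸ hsum]
    calc Real.exp (-9 * T * ε ^ 2 * δ)
        ≤ Real.exp (∑ x ∈ Finset.range K,
            (2 / (M:ℝ)) * (-∑ t ∈ Finset.range T, (3 * ε * qform (O x) (ψ t))^2)) :=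
          Real.exp_le_exp.mpr hexp
      _ ≤ ∑ x ∈ Finset.range K, (2 / (M:ℝ)) *
            Real.exp (-∑ t ∈ Finset.range T, (3 * ε * qform (O x) (ψ t))^2) := jensen
      _ = (1 / M : ℝ) * ∑ x ∈ Finset.range K,
            2 * Real.exp (-∑ t ∈ Finset.range T, (3 * ε * qform (O x) (ψ t))^2) := by
          rw [Finset.mul_sum]
          exact Finset.sum_congr rfl fun x _ => by ring
      _ ≤ (1 / M : ℝ) * ∑ x ∈ Finset.range M,
            ∏ t ∈ Finset.range T, (1 + 3 * ε * qform (O x) (ψ t)) := by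
          exact mul_le_mul_of_nonneg_left hstep1 (by positivity)
  · linarith [Real.add_one_le_exp (-9 * T * ε ^ 2 * δ)]
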